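/- Let f: ℝ^{m×n} → ℝ be differentiable and g(A,B) = f(ABᵀ) + (λ/2)(‖A‖_F² + ‖B‖_F²) with λ ≥ 0. If (A, B) is a stationary point of g with X = ABᵀ having compact SVD X = L Σ Rᵀ (and, when λ > 0, writing A = LΣ^{1/2}W, B = RΣ^{1/2}W for orthogonal W), then ∇f(X)·R = −λL and ∇f(X)ᵀ·L = −λR; consequently ∇f(X) = −λ L Rᵀ + S for some S ∈ ℝ^{m×n} with LᵀS = 0 and SR = 0. -/

import Mathlib

open Matrix BigOperators

/-- Frobenius norm of a real matrix. -/
noncomputable def frob {m n : ℕ} (X : Matrix (Fin m) (Fin n) ℝ) : ℝ :=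
  Real.sqrt (∑ i, ∑ j, (X i j) ^ 2)

/-- Frobenius (trace) inner product ⟨A,B⟩ = tr(AᵀB). -/
def mip {m n : ℕ} (A B : Matrix (Fin m) (Fin n) ℝ) : ℝ :=
  ∑ i, ∑ j, A i j * B i j

/-- Nuclear norm: sum of singular values, i.e. sum of square roots of the
eigenvalues of XᴴX. -/
noncomputable def nuc {m n : ℕ} (X : Matrix (Fin m) (Fin n) ℝ) : ℝ :=
  ∑ i, Real.sqrt ((show (Xᵀ * X).IsHermitian by
    simpa only [Matrix.conjTranspose_eq_transpose_of_trivial] using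
      Matrix.isHermitian_conjTranspose_mul_self X).eigenvalues i)

/-- At a stationary point with X = ABᵀ = LΣRᵀ a compact SVD and
A = LΣ^{1/2}W, B = RΣ^{1/2}W for W with orthonormal rows, the gradient of f
satisfies ∇f(X)·R = −λL, ∇f(X)ᵀ·L = −λR, and ∇f(X) = −λLRᵀ + S with
LᵀS = 0, SR = 0. -/
theorem stmt19 {m n r k : ℕ} (lam : ℝ) (hlam : 0 ≤ lam)
    (f : Matrix (Fin m) (Fin n) ℝ → ℝ)
    (A : Matrix (Fin m) (Fin r) ℝ) (B : Matrix (Fin n) (Fin r) ℝ)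
    (G : Matrix (Fin m) (Fin n) ℝ)
    (L : Matrix (Fin m) (Fin k) ℝ) (R : Matrix (Fin n) (Fin k) ℝ)
    (σ : Fin k → ℝ) (W : Matrix (Fin k) (Fin r) ℝ)
    (hG : ∀ H : Matrix (Fin m) (Fin n) ℝ,
      HasDerivAt (fun t : ℝ => f (A * Bᵀ + t • H)) (mip G H) 0)
    (h1 : G * B + lam • A = 0)
    (h2 : Gᵀ * A + lam • B = 0)
    (hL : Lᵀ * L = 1) (hR : Rᵀ * R = 1) (hσ : ∀ i, 0 < σ i)
    (hX : A * Bᵀ = L * Matrix.diagonal σ * Rᵀ)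
    (hW : W * Wᵀ = 1)
    (hA : A = L * Matrix.diagonal (fun i => Real.sqrt (σ i)) * W)
    (hB : B = R * Matrix.diagonal (fun i => Real.sqrt (σ i)) * W) :
    G * R = (-lam) • L ∧ Gᵀ * L = (-lam) • R ∧
    ∃ S : Matrix (Fin m) (Fin n) ℝ,
      G = (-lam) • (L * Rᵀ) + S ∧ Lᵀ * S = 0 ∧ S * R = 0 := by
  set D : Matrix (Fin k) (Fin k) ℝ := Matrix.diagonal (fun i => Real.sqrt (σ i)) with hD
  have hDinv : D * Matrix.diagonal (fun i => (Real.sqrt (σ i))⁻¹) = 1 := by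
    rw [hD, Matrix.diagonal_mul_diagonal]
    have : (fun i => Real.sqrt (σ i) * (Real.sqrt (σ i))⁻¹) = fun _ => (1 : ℝ) := by
      funext i
      exact mul_inv_cancel₀ (ne_of_gt (Real.sqrt_pos.2 (hσ i)))
    rw [this, Matrix.diagonal_one]
  have cancel : ∀ {p : ℕ} (M : Matrix (Fin p) (Fin k) ℝ), M * D * W = 0 → M = 0 := by
    intro p M h
    have h' : M * D * W * Wᵀ = 0 := by rw [h]; simp
    rw [Matrix.mul_assoc (M * D), hW, Matrix.mul_one] at h'
    have h'' : M * D * Matrix.diagonal (fun i => (Real.sqrt (σ i))⁻¹) = 0 := by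
      rw [h']; simp
    rwa [Matrix.mul_assoc, hDinv, Matrix.mul_one] at h''
  have key1 : G * R = (-lam) • L := by
    have e1 : (G * R + lam • L) * D * W = 0 := by
      rw [hA, hB] at h1
      calc (G * R + lam • L) * D * W
          = G * (R * D * W) + lam • (L * D * W) := by
            rw [Matrix.add_mul, Matrix.add_mul, Matrix.smul_mul, Matrix.smul_mul,
              Matrix.mul_assoc, Matrix.mul_assoc, Matrix.mul_assoc, Matrix.mul_assoc]
        _ = 0 := h1
    have h3 := eq_neg_of_add_eq_zero_left (cancel _ e1)
    rw [h3, neg_smul]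
  have key2 : Gᵀ * L = (-lam) • R := by
    have e1 : (Gᵀ * L + lam • R) * D * W = 0 := by
      rw [hA, hB] at h2
      calc (Gᵀ * L + lam • R) * D * W
          = Gᵀ * (L * D * W) + lam • (R * D * W) := by
            rw [Matrix.add_mul, Matrix.add_mul, Matrix.smul_mul, Matrix.smul_mul,
              Matrix.mul_assoc, Matrix.mul_assoc, Matrix.mul_assoc, Matrix.mul_assoc]
        _ = 0 := h2
    have h3 := eq_neg_of_add_eq_zero_left (cancel _ e1)
    rw [h3, neg_smul]
  refine ⟨key1, key2, G + lam • (L * Rᵀ), by module, ?_, ?_⟩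
  · have hLG : Lᵀ * G = (-lam) • Rᵀ := by
      have := congrArg Matrix.transpose key2
      rwa [Matrix.transpose_mul, Matrix.transpose_transpose, Matrix.transpose_smul] at this
    rw [Matrix.mul_add, hLG, Matrix.mul_smul, ← Matrix.mul_assoc, hL, Matrix.one_mul]
    simp [neg_smul]
  · rw [Matrix.add_mul, key1, Matrix.smul_mul, Matrix.mul_assoc, hR, Matrix.mul_one]
    simp [neg_smul]
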